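/- If M ⊆ R^p is generated by h_1,...,h_r, then the double M_D is generated by the elements (h_j)_D together with (z_i h_j)_D for 1 ≤ i ≤ n and 1 ≤ j ≤ r, where z_1,...,z_n are the coordinate functions. -/
import Mathlib


/-- The double of `h ∈ R^p` along the two "pullback" homomorphisms `φ1, φ2 : R →+* S`. -/
def Lip.double {R S : Type*} [CommRing R] [CommRing S] {p : ℕ}
    (φ1 φ2 : R →+* S) (h : Fin p → R) : Fin p ⊕ Fin p → S :=
  Sum.elim (fun i => φ1 (h i)) (fun i => φ2 (h i))

/-- If `M ⊆ R^p` is generated by `h 1, ..., h r`, then the double `M_D` (the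
`S`-submodule generated by the doubles of elements of `M`) is generated by the `(h j)_D`
together with the `(z i • h j)_D`, where `z 1, ..., z n` are the coordinate functions,
assuming that `φ1 α − φ2 α` always lies in the ideal generated by the `φ1 (z i) − φ2 (z i)`. -/
theorem doubleSpan_generators {R S : Type*} [CommRing R] [CommRing S] {p r n : ℕ}
    (φ1 φ2 : R →+* S) (z : Fin n → R)
    (hz : ∀ α : R, φ1 α - φ2 α ∈ Ideal.span (Set.range fun i => φ1 (z i) - φ2 (z i)))
    (h : Fin r → (Fin p → R)) (M : Submodule R (Fin p → R))
    (hM : M = Submodule.span R (Set.range h)) :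
    Submodule.span S (Lip.double φ1 φ2 '' M)
      = Submodule.span S
          ((Set.range fun j => Lip.double φ1 φ2 (h j)) ∪
           (Set.range fun ij : Fin n × Fin r => Lip.double φ1 φ2 (z ij.1 • h ij.2))) := by
  subst hM
  set G : Set (Fin p ⊕ Fin p → S) :=
    ((Set.range fun j => Lip.double φ1 φ2 (h j)) ∪
     (Set.range fun ij : Fin n × Fin r => Lip.double φ1 φ2 (z ij.1 • h ij.2))) with hG
  set N := Submodule.span S G with hN
  apply le_antisymm
  · rw [Submodule.span_le]
    rintro _ ⟨m, hm, rfl⟩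
    rw [SetLike.mem_coe, Finsupp.mem_span_range_iff_exists_finsupp] at hm
    obtain ⟨a, rfl⟩ := hm
    have hDj : ∀ j, Lip.double φ1 φ2 (h j) ∈ N := fun j =>
      Submodule.subset_span (Or.inl ⟨j, rfl⟩)
    have hDij : ∀ i j, Lip.double φ1 φ2 (z i • h j) ∈ N := fun i j =>
      Submodule.subset_span (Or.inr ⟨(i, j), rfl⟩)
    have key : Lip.double φ1 φ2 (a.sum fun j c => c • h j)
        = ∑ j ∈ a.support, φ2 (a j) • Lip.double φ1 φ2 (h j)
          + ∑ j ∈ a.support, (φ1 (a j) - φ2 (a j)) •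
              (Sum.elim (fun k => φ1 (h j k)) 0 : Fin p ⊕ Fin p → S) := by
      funext x
      cases x with
      | inl k =>
        simp only [Lip.double, Finsupp.sum_apply, Finsupp.sum, Sum.elim_inl,
          Pi.add_apply, Finset.sum_apply, Pi.smul_apply, smul_eq_mul]
        rw [map_sum, ← Finset.sum_add_distrib]
        refine Finset.sum_congr rfl fun j _ => ?_
        rw [map_mul]; ring
      | inr k =>
        simp only [Lip.double, Finsupp.sum_apply, Finsupp.sum, Sum.elim_inr,
          Pi.add_apply, Finset.sum_apply, Pi.smul_apply, smul_eq_mul, Pi.zero_apply,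
          mul_zero]
        rw [map_sum, Finset.sum_const_zero, add_zero]
        exact Finset.sum_congr rfl fun j _ => map_mul _ _ _
    rw [key]
    refine N.add_mem (Submodule.sum_mem _ fun j _ => N.smul_mem _ (hDj j))
      (Submodule.sum_mem _ fun j _ => ?_)
    -- show (φ1 (a j) - φ2 (a j)) • F j ∈ N, using hz
    set F : Fin p ⊕ Fin p → S := (Sum.elim (fun k => φ1 (h j k)) 0) with hF
    have hgen : ∀ i, (φ1 (z i) - φ2 (z i)) • F ∈ N := by
      intro i
      have heq : (φ1 (z i) - φ2 (z i)) • F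
          = Lip.double φ1 φ2 (z i • h j) - φ2 (z i) • Lip.double φ1 φ2 (h j) := by
        funext x
        cases x with
        | inl k =>
          simp only [hF, Lip.double, Sum.elim_inl, Pi.smul_apply, Pi.sub_apply,
            smul_eq_mul, Pi.smul_apply, smul_eq_mul, map_mul]
          ring
        | inr k =>
          simp [hF, Lip.double, map_mul]
      rw [heq]
      exact N.sub_mem (hDij i j) (N.smul_mem _ (hDj j))
    have hI : Ideal.span (Set.range fun i => φ1 (z i) - φ2 (z i)) ≤
        N.comap (LinearMap.toSpanSingleton S _ F) := by
      rw [Ideal.span_le]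
      rintro _ ⟨i, rfl⟩
      simpa [LinearMap.toSpanSingleton_apply] using hgen i
    have := hI (hz (a j))
    simpa [LinearMap.toSpanSingleton_apply] using this
  · rw [Submodule.span_le]
    rintro _ (⟨j, rfl⟩ | ⟨⟨i, j⟩, rfl⟩)
    · exact Submodule.subset_span ⟨h j, Submodule.subset_span ⟨j, rfl⟩, rfl⟩
    · exact Submodule.subset_span ⟨z i • h j,
        Submodule.smul_mem _ _ (Submodule.subset_span ⟨j, rfl⟩), rfl⟩
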